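/- Let s₁,s₂ ∈ ℂ and work in the 6×6 complex matrices with rows and columns indexed by 0,...,5. Let Q = I + s₂E₂₀ − conj(s₂)E₃₅, Q' = I + s₁E₁₀ − conj(s₁)E₃₄, and let Π be the cyclic permutation matrix with (i,j)-entry equal to 1 exactly when j ≡ i+1 (mod 6). Then the characteristic polynomial det(λI − QQ'Π) equals λ⁶ − s₁λ⁵ − s₂λ⁴ + conj(s₂)λ² + conj(s₁)λ − 1. -/

import Mathlib

open Matrix

/-- `stdE n i j` is the `n×n` complex matrix whose only nonzero entry is a `1`
in position `(i, j)`. -/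
noncomputable def stdE (n : ℕ) (i j : Fin n) : Matrix (Fin n) (Fin n) ℂ :=
  Matrix.single i j 1

/-- The cyclic permutation matrix `Π` of size 6: `(i,j)`-entry is `1` iff `j ≡ i+1 (mod 6)`. -/
noncomputable def cyc6 : Matrix (Fin 6) (Fin 6) ℂ :=
  Matrix.of fun i j => if j = i + 1 then 1 else 0

lemma Emul (i j : Fin 6) : stdE 6 i j * cyc6 = stdE 6 i (j + 1) := by
  ext a b
  by_cases ha : a = i
  · subst ha
    rw [stdE, stdE, Matrix.single_mul_apply_same]
    simp only [cyc6, Matrix.single, Matrix.of_apply, one_mul, true_and]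
    by_cases hb : b = j + 1 <;> simp [hb, eq_comm]
  · rw [stdE, stdE, Matrix.single_mul_apply_of_ne (h := ha)]
    simp only [Matrix.single, Matrix.of_apply]; rw [if_neg (fun h => ha h.1.symm)]

set_option maxHeartbeats 2000000 in
set_option maxRecDepth 8000 in
/-- The characteristic polynomial of `Q₁ Q_{1⅙} Π` in the `n = 6` cases. -/
theorem charpoly_n6 (s₁ s₂ : ℂ) :
    ∀ lam : ℂ,
      Matrix.det (lam • (1 : Matrix (Fin 6) (Fin 6) ℂ) -
          (1 + s₂ • stdE 6 2 0 - (starRingEnd ℂ) s₂ • stdE 6 3 5) *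
            (1 + s₁ • stdE 6 1 0 - (starRingEnd ℂ) s₁ • stdE 6 3 4) * cyc6) =
        lam ^ 6 - s₁ * lam ^ 5 - s₂ * lam ^ 4 + (starRingEnd ℂ) s₂ * lam ^ 2 +
          (starRingEnd ℂ) s₁ * lam - 1 := by
  intro lam
  have h1 : stdE 6 2 0 * stdE 6 1 0 = 0 := by simp [stdE]
  have h2 : stdE 6 2 0 * stdE 6 3 4 = 0 := by simp [stdE]
  have h3 : stdE 6 3 5 * stdE 6 1 0 = 0 := by simp [stdE]
  have h4 : stdE 6 3 5 * stdE 6 3 4 = 0 := by simp [stdE]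
  have e1 : (1 + s₂ • stdE 6 2 0 - (starRingEnd ℂ) s₂ • stdE 6 3 5) *
            (1 + s₁ • stdE 6 1 0 - (starRingEnd ℂ) s₁ • stdE 6 3 4) * cyc6 =
      cyc6 + s₁ • stdE 6 1 1 + s₂ • stdE 6 2 1
        - (starRingEnd ℂ) s₁ • stdE 6 3 5
        - (starRingEnd ℂ) s₂ • stdE 6 3 0 := by
    have expand : (1 + s₂ • stdE 6 2 0 - (starRingEnd ℂ) s₂ • stdE 6 3 5) *
            (1 + s₁ • stdE 6 1 0 - (starRingEnd ℂ) s₁ • stdE 6 3 4) =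
        1 + s₁ • stdE 6 1 0 + s₂ • stdE 6 2 0
          - (starRingEnd ℂ) s₁ • stdE 6 3 4 - (starRingEnd ℂ) s₂ • stdE 6 3 5 := by
      simp only [sub_mul, add_mul, mul_sub, mul_add, one_mul, mul_one,
        Matrix.smul_mul, Matrix.mul_smul, h1, h2, h3, h4, smul_zero, sub_zero]
      abel
    rw [expand]
    simp only [sub_mul, add_mul, one_mul, Matrix.smul_mul, Emul]
    norm_num
    rfl
  rw [e1]
  have h : (lam • (1 : Matrix (Fin 6) (Fin 6) ℂ) -
      (cyc6 + s₁ • stdE 6 1 1 + s₂ • stdE 6 2 1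
        - (starRingEnd ℂ) s₁ • stdE 6 3 5 - (starRingEnd ℂ) s₂ • stdE 6 3 0)) =
      !![lam, -1, 0, 0, 0, 0;
         0, lam - s₁, -1, 0, 0, 0;
         0, -s₂, lam, -1, 0, 0;
         (starRingEnd ℂ) s₂, 0, 0, lam, -1, (starRingEnd ℂ) s₁;
         0, 0, 0, 0, lam, -1;
         -1, 0, 0, 0, 0, lam] := by
    ext i j
    fin_cases i <;> fin_cases j <;>
      simp [stdE, cyc6, Matrix.single, Matrix.one_apply] <;> first | rfl | ring
  rw [h]
  simp [Matrix.det_succ_row_zero, Fin.sum_univ_succ, Fin.succAbove]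
  ring
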